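/- Combining the recursion: under the hypotheses of the previous descent recursion (deterministic version), for every T ≥ 1, min_{0 ≤ t ≤ T-1} ‖∇J(θ_t)‖² ≤ 2δ₀(1 + Lη²A)^T / (ηT(2 − LBη)) + LCη/(2 − LBη), where δ₀ = J* − J(θ₀). -/

import Mathlib

open RealInnerProductSpace

lemma descent_aux {E : Type*} [NormedAddCommGroup E] [InnerProductSpace ℝ E] [CompleteSpace E]
    {J : E → ℝ} {g : E → E} {L : ℝ}
    (hgrad : ∀ θ, HasGradientAt J (g θ) θ)
    (hLip : ∀ θ θ', ‖g θ - g θ'‖ ≤ L * ‖θ - θ'‖) (x v : E) :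
    J x + ⟪g x, v⟫ - L / 2 * ‖v‖ ^ 2 ≤ J (x + v) := by
  have hline : ∀ s : ℝ, HasDerivAt (fun s : ℝ => x + s • v) v s := by
    intro s
    simpa using ((hasDerivAt_id s).smul_const v).const_add x
  have hφ : ∀ s : ℝ, HasDerivAt (fun s : ℝ => J (x + s • v)) ⟪g (x + s • v), v⟫ s := by
    intro s
    have h1 := (hgrad (x + s • v)).hasFDerivAt
    have := h1.comp_hasDerivAt s (hline s)
    simpa [InnerProductSpace.toDual_apply_apply, Function.comp_def] using this
  set ψ : ℝ → ℝ := fun s => J (x + s • v) - s * ⟪g x, v⟫ + s ^ 2 * (L / 2 * ‖v‖ ^ 2) with hψdef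
  have hψ : ∀ s : ℝ, HasDerivAt ψ
      (⟪g (x + s • v), v⟫ - ⟪g x, v⟫ + 2 * s * (L / 2 * ‖v‖ ^ 2)) s := by
    intro s
    have h := ((hφ s).sub ((hasDerivAt_id s).mul_const ⟪g x, v⟫)).add
      ((hasDerivAt_pow 2 s).mul_const (L / 2 * ‖v‖ ^ 2))
    refine h.congr_deriv ?_
    push_cast
    ring
  have hmono : MonotoneOn ψ (Set.Icc (0:ℝ) 1) := by
    apply monotoneOn_of_deriv_nonneg (convex_Icc 0 1)
    · exact (Differentiable.continuous (fun s => (hψ s).differentiableAt)).continuousOn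
    · exact fun s _ => ((hψ s).differentiableAt).differentiableWithinAt
    · intro s hs
      rw [interior_Icc] at hs
      rw [(hψ s).deriv]
      have h1 : ⟪g x, v⟫ - ⟪g (x + s • v), v⟫ ≤ L * s * ‖v‖ ^ 2 := by
        have h2 : ⟪g x - g (x + s • v), v⟫ ≤ ‖g x - g (x + s • v)‖ * ‖v‖ :=
          real_inner_le_norm _ _
        have h3 : ‖g x - g (x + s • v)‖ ≤ L * ‖x - (x + s • v)‖ := hLip _ _
        have h4 : ‖x - (x + s • v)‖ = s * ‖v‖ := by
          rw [sub_add_cancel_left, norm_neg, norm_smul, Real.norm_eq_abs,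
            abs_of_pos hs.1]
        rw [inner_sub_left] at h2
        rw [h4] at h3
        nlinarith [mul_le_mul_of_nonneg_right h3 (norm_nonneg v), norm_nonneg v]
      nlinarith
  have h01 := hmono (Set.mem_Icc.mpr ⟨le_refl 0, zero_le_one⟩)
    (Set.mem_Icc.mpr ⟨zero_le_one, le_refl 1⟩) zero_le_one
  simp only [hψdef, zero_smul, add_zero, one_smul, zero_mul, zero_pow, one_mul, one_pow,
    sub_zero] at h01
  linarith

theorem min_grad_norm_bound (d : ℕ) (hd : 0 < d) (L A B C η Jstar : ℝ)
    (hL : 0 ≤ L) (hA : 0 ≤ A) (hB : 0 ≤ B) (hC : 0 ≤ C) (hη : 0 < η)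
    (hstep : 1 - L * B * η / 2 > 0)
    (J : EuclideanSpace ℝ (Fin d) → ℝ) (g : EuclideanSpace ℝ (Fin d) → EuclideanSpace ℝ (Fin d))
    (hgrad : ∀ θ, HasGradientAt J (g θ) θ)
    (hLip : ∀ θ θ', ‖g θ - g θ'‖ ≤ L * ‖θ - θ'‖)
    (hub : ∀ θ, J θ ≤ Jstar)
    (θ gs : ℕ → EuclideanSpace ℝ (Fin d))
    (hupd : ∀ t : ℕ, θ (t + 1) = θ t + η • gs t)
    (hinner : ∀ t : ℕ, ⟪g (θ t), gs t⟫ = ‖g (θ t)‖ ^ 2)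
    (hnorm : ∀ t : ℕ, ‖gs t‖ ^ 2 ≤ 2 * A * (Jstar - J (θ t)) + B * ‖g (θ t)‖ ^ 2 + C) :
    ∀ T : ℕ, (hT : 1 ≤ T) →
      (Finset.range T).inf' (Finset.nonempty_range_iff.mpr (by omega))
          (fun t => ‖g (θ t)‖ ^ 2) ≤
        2 * (Jstar - J (θ 0)) * (1 + L * η ^ 2 * A) ^ T / (η * T * (2 - L * B * η)) +
          L * C * η / (2 - L * B * η) := by
  intro T hT
  have h2 : (0:ℝ) < 2 - L * B * η := by linarith
  set ρ : ℝ := 1 + L * η ^ 2 * A with hρdef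
  have hρ1 : 1 ≤ ρ := by rw [hρdef]; nlinarith [mul_nonneg (mul_nonneg hL (sq_nonneg η)) hA]
  have hρ0 : (0:ℝ) < ρ := by linarith
  clear_value ρ
  set c : ℝ := η * (2 - L * B * η) / 2 with hcdef
  have hc : 0 < c := by rw [hcdef]; positivity
  clear_value c
  set δ : ℕ → ℝ := fun t => Jstar - J (θ t) with hδdef
  clear_value δ
  have hδ0 : ∀ t, 0 ≤ δ t := fun t => by rw [hδdef]; simp only; linarith [hub (θ t)]
  set K : ℝ := L * C * η ^ 2 / 2 with hKdef
  clear_value K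
  have step : ∀ t, c * ‖g (θ t)‖ ^ 2 ≤ ρ * δ t - δ (t + 1) + K := by
    intro t
    have hd := descent_aux hgrad hLip (θ t) (η • gs t)
    rw [← hupd t] at hd
    have hin : ⟪g (θ t), η • gs t⟫ = η * ‖g (θ t)‖ ^ 2 := by
      rw [real_inner_smul_right, hinner]
    have hnn : ‖η • gs t‖ ^ 2 = η ^ 2 * ‖gs t‖ ^ 2 := by
      rw [norm_smul, Real.norm_eq_abs, mul_pow, sq_abs]
    rw [hin, hnn] at hd
    have hb := mul_le_mul_of_nonneg_left (hnorm t) (by positivity : (0:ℝ) ≤ L * η ^ 2 / 2)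
    rw [hρdef, hcdef, hδdef, hKdef]
    simp only
    nlinarith [hb, hd]
  have key : ∀ n : ℕ, δ n / ρ ^ n +
      c * ∑ t ∈ Finset.range n, ‖g (θ t)‖ ^ 2 / ρ ^ (t + 1) ≤
      δ 0 + K * ∑ t ∈ Finset.range n, 1 / ρ ^ (t + 1) := by
    intro n
    induction n with
    | zero => simp
    | succ n ih =>
      rw [Finset.sum_range_succ, Finset.sum_range_succ]
      have hs := step n
      have hpn : (0:ℝ) < ρ ^ n := pow_pos hρ0 n
      have hpn1 : (0:ℝ) < ρ ^ (n + 1) := pow_pos hρ0 _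
      have h1 : δ (n + 1) / ρ ^ (n + 1) + c * (‖g (θ n)‖ ^ 2 / ρ ^ (n + 1)) ≤
          δ n / ρ ^ n + K * (1 / ρ ^ (n + 1)) := by
        have e1 : δ (n + 1) / ρ ^ (n + 1) + c * (‖g (θ n)‖ ^ 2 / ρ ^ (n + 1)) =
            (δ (n + 1) + c * ‖g (θ n)‖ ^ 2) / ρ ^ (n + 1) := by ring
        have e2 : δ n / ρ ^ n + K * (1 / ρ ^ (n + 1)) = (ρ * δ n + K) / ρ ^ (n + 1) := by
          rw [pow_succ]
          field_simp
        rw [e1, e2]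
        rw [div_le_div_iff_of_pos_right hpn1]
        linarith [hs]
      linarith [ih, h1]
  -- deduce the bound
  set m : ℝ := (Finset.range T).inf' (Finset.nonempty_range_iff.mpr (by omega))
      (fun t => ‖g (θ t)‖ ^ 2) with hmdef
  set S : ℝ := ∑ t ∈ Finset.range T, 1 / ρ ^ (t + 1) with hSdef
  have hS0 : 0 < S := by
    rw [hSdef]
    apply Finset.sum_pos (fun t _ => by positivity)
    exact Finset.nonempty_range_iff.mpr (by omega)
  have hT0 : (0:ℝ) < T := by exact_mod_cast hT
  have hpT : (0:ℝ) < ρ ^ T := pow_pos hρ0 T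
  have hSlb : (T : ℝ) / ρ ^ T ≤ S := by
    rw [hSdef, div_eq_mul_one_div]
    calc (T : ℝ) * (1 / ρ ^ T) = ∑ _t ∈ Finset.range T, 1 / ρ ^ T := by
          rw [Finset.sum_const, Finset.card_range, nsmul_eq_mul]
      _ ≤ ∑ t ∈ Finset.range T, 1 / ρ ^ (t + 1) := by
          apply Finset.sum_le_sum
          intro t ht
          have hle : ρ ^ (t + 1) ≤ ρ ^ T := pow_le_pow_right₀ hρ1 (Finset.mem_range.mp ht)
          have hp1 : (0:ℝ) < ρ ^ (t + 1) := pow_pos hρ0 _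
          exact one_div_le_one_div_of_le hp1 hle
  have hmS : m * S ≤ ∑ t ∈ Finset.range T, ‖g (θ t)‖ ^ 2 / ρ ^ (t + 1) := by
    rw [hSdef, Finset.mul_sum]
    apply Finset.sum_le_sum
    intro t ht
    rw [mul_one_div]
    rw [div_le_div_iff_of_pos_right (pow_pos hρ0 _)]
    exact hmdef ▸ Finset.inf'_le _ ht
  clear_value m S
  have hmain : c * (m * S) ≤ δ 0 + K * S := by
    have hkT := key T
    rw [← hSdef] at hkT
    have h3 : c * (m * S) ≤ c * ∑ t ∈ Finset.range T, ‖g (θ t)‖ ^ 2 / ρ ^ (t + 1) :=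
      mul_le_mul_of_nonneg_left hmS hc.le
    have h4 : 0 ≤ δ T / ρ ^ T := div_nonneg (hδ0 T) (pow_pos hρ0 T).le
    linarith
  have hfin : m ≤ δ 0 * ρ ^ T / (c * T) + K / c := by
    have h5 : m ≤ δ 0 / (c * S) + K / c := by
      have e : (δ 0 / (c * S) + K / c) * (c * S) = δ 0 + K * S := by
        field_simp [hc.ne', hS0.ne']
      have h6 : m * (c * S) ≤ (δ 0 / (c * S) + K / c) * (c * S) := by
        rw [e]; nlinarith [hmain]
      exact le_of_mul_le_mul_right h6 (mul_pos hc hS0)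
    have h7 : δ 0 / (c * S) ≤ δ 0 / (c * ((T : ℝ) / ρ ^ T)) := by
      rcases eq_or_lt_of_le (hδ0 0) with h0 | h0
      · rw [← h0]
        simp
      · rw [div_le_div_iff_of_pos_left h0 (mul_pos hc hS0) (mul_pos hc (div_pos hT0 hpT))]
        exact mul_le_mul_of_nonneg_left hSlb hc.le
    have h8 : δ 0 / (c * ((T : ℝ) / ρ ^ T)) = δ 0 * ρ ^ T / (c * T) := by
      rw [div_eq_div_iff (mul_pos hc (div_pos hT0 hpT)).ne' (mul_pos hc hT0).ne']
      field_simp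
      try ring
    linarith
  have eqA : δ 0 * ρ ^ T / (c * T) =
      2 * (Jstar - J (θ 0)) * ρ ^ T / (η * (T : ℝ) * (2 - L * B * η)) := by
    rw [hδdef, hcdef]
    simp only
    rw [div_eq_div_iff (by positivity : (0:ℝ) < η * (2 - L * B * η) / 2 * T).ne' (by positivity : (0:ℝ) < η * T * (2 - L * B * η)).ne']
    ring
  have eqB : K / c = L * C * η / (2 - L * B * η) := by
    rw [hKdef, hcdef, div_eq_div_iff (by positivity : (0:ℝ) < η * (2 - L * B * η) / 2).ne' h2.ne']
    ring
  linarith [hfin, eqA.le, eqB.le, eqA.ge, eqB.ge]
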